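/- The maximal independent set problem is not locally fixable: there exists a graph G on 2Δ vertices and a feasible MIS solution such that after inserting a single edge, every feasible solution of the new graph differs from the old one in at least Δ vertices' states. -/

import Mathlib

/-- Maximal independent set is not locally fixable: there is a graph on
`2Δ` vertices and a feasible MIS solution such that after inserting one edge, every
feasible MIS solution of the new graph differs from the old one in at least `Δ`
vertices' states. -/
theorem stmt17 (Δ : ℕ) (hΔ : 2 ≤ Δ) :
    ∃ (G : SimpleGraph (Fin (2 * Δ))) (sol : Fin (2 * Δ) → Bool) (u v : Fin (2 * Δ)),
      u ≠ v ∧ ¬ G.Adj u v ∧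
      (∀ a b, G.Adj a b → ¬(sol a = true ∧ sol b = true)) ∧
      (∀ a, (∀ b, G.Adj a b → sol b = false) → sol a = true) ∧
      (∀ sol' : Fin (2 * Δ) → Bool,
        (∀ a b, (G ⊔ SimpleGraph.fromEdgeSet {s(u, v)}).Adj a b →
          ¬(sol' a = true ∧ sol' b = true)) →
        (∀ a, (∀ b, (G ⊔ SimpleGraph.fromEdgeSet {s(u, v)}).Adj a b → sol' b = false) →
          sol' a = true) →
        Δ ≤ (Finset.univ.filter (fun w => sol w ≠ sol' w)).card) := by
  have h0 : 0 < 2 * Δ := by omega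
  have hD : Δ < 2 * Δ := by omega
  set u : Fin (2 * Δ) := ⟨0, h0⟩ with hu
  set v : Fin (2 * Δ) := ⟨Δ, hD⟩ with hv
  set c : Fin (2 * Δ) → Fin (2 * Δ) := fun i => if (i : ℕ) < Δ then u else v with hc
  have huv : u ≠ v := by
    simp [hu, hv, Fin.ext_iff]; omega
  have hcu : c u = u := by simp [hc, hu]; omega
  have hcv : c v = v := by simp [hc, hv]
  have hcuv : ∀ i, c i = u ∨ c i = v := by
    intro i; by_cases h : (i : ℕ) < Δ <;> simp [hc, h]
  -- the graph: two stars with centers u and v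
  refine ⟨⟨fun a b => a ≠ b ∧ (a = c b ∨ b = c a), ?_, ?_⟩,
    fun i => decide (i = u ∨ i = v), u, v, huv, ?_, ?_, ?_, ?_⟩
  · constructor; intro a b ⟨h1, h2⟩; exact ⟨h1.symm, h2.symm⟩
  · constructor; intro a ⟨h1, _⟩; exact h1 rfl
  · -- u not adjacent v
    rintro ⟨h1, h2 | h2⟩
    · rw [hcv] at h2; exact huv h2
    · rw [hcu] at h2; exact huv h2.symm
  · -- independence
    rintro a b ⟨hab, h⟩ ⟨ha, hb⟩
    simp only [decide_eq_true_eq] at ha hb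
    have hca : c a = a := by rcases ha with h' | h' <;> rw [h'] <;> [exact hcu; exact hcv]
    have hcb : c b = b := by rcases hb with h' | h' <;> rw [h'] <;> [exact hcu; exact hcv]
    rcases h with h | h
    · rw [hcb] at h; exact hab h
    · rw [hca] at h; exact hab h.symm
  · -- maximality of sol
    intro a h
    by_cases hca : a = c a
    · rcases hcuv a with h' | h' <;> rw [← hca] at h' <;> simp [h']
    · have := h (c a) ⟨hca, Or.inr rfl⟩
      rcases hcuv a with h' | h' <;> rw [h'] at this <;> simp at this
  · -- main part
    intro sol' hind hmax
    -- u,v adjacent in new graph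
    have hadj : (∀ a b, _) := hind
    have huv' : ¬(sol' u = true ∧ sol' v = true) := by
      apply hind
      right
      simp [huv]
    -- key lemma: if a center is off, all its Δ vertices (center+leaves) differ
    have key : ∀ w : Fin (2 * Δ), w ≠ u → w ≠ v → c w ≠ w →
        sol' (c w) = false → sol' w = true := by
      intro w hwu hwv hcw hcf
      apply hmax
      intro b hb
      rcases hb with ⟨hne, h | h⟩ | h
      · -- w = c b, impossible since c b ∈ {u,v}
        exfalso; rcases hcuv b with h' | h' <;> rw [h'] at h <;> [exact hwu h; exact hwv h]
      · rw [h]; exact hcf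
      · -- new edge touches only u, v
        exfalso
        simp only [SimpleGraph.fromEdgeSet_adj, Set.mem_singleton_iff, Sym2.eq,
          Sym2.rel_iff', Prod.mk.injEq, Prod.swap_prod_mk] at h
        rcases h.1 with ⟨h1, _⟩ | ⟨h1, _⟩ <;> [exact hwu h1; exact hwv h1]
    have main : ∀ z : Fin (2 * Δ), sol' z = false → (z = u ∨ z = v) →
        Δ ≤ (Finset.univ.filter (fun w => (decide (w = u ∨ w = v) : Bool) ≠ sol' w)).card := by
      intro z hz hzuv
      -- the Δ vertices of z's star all differ
      classical
      set off : ℕ := if z = u then 0 else Δ with hoff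
      have hoffc : off = 0 ∨ off = Δ := by simp only [hoff]; split <;> simp
      have hzval : (z : ℕ) = off := by
        rcases hzuv with h | h
        · simp [hoff, h, hu]
        · simp [hoff, h, hv, Ne.symm huv]; intro h'; exact absurd (hv.trans h') (Ne.symm huv)
      set f : ℕ → Fin (2 * Δ) := fun i => ⟨min (i + off) (2 * Δ - 1), by omega⟩ with hf
      have hfval : ∀ i, i < Δ → ((f i : Fin (2 * Δ)) : ℕ) = i + off := by
        intro i hi; simp only [hf]; omega
      have hinj : ∀ i ∈ Finset.range Δ, f i ∈
          Finset.univ.filter (fun w => (decide (w = u ∨ w = v) : Bool) ≠ sol' w) := by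
        intro i hi
        simp only [Finset.mem_range] at hi
        have hwval := hfval i hi
        simp only [Finset.mem_filter, Finset.mem_univ, true_and]
        by_cases hiz : i = 0
        · -- f i = z, the center
          have hwz : f i = z := by apply Fin.ext; omega
          rw [hwz]
          rcases hzuv with h | h <;> subst h <;> simp [hz, huv, Ne.symm huv]
        · -- f i is a leaf of z
          have hwu : f i ≠ u := by
            intro h; have := congrArg Fin.val h; simp only [hu] at this; omega
          have hwv : f i ≠ v := by
            intro h; have := congrArg Fin.val h; simp only [hv] at this; omega
          have hcwz : c (f i) = z := by
            rcases hoffc with h | h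
            · have h1 : ((f i : Fin (2 * Δ)) : ℕ) < Δ := by omega
              have h2 : z = u := by apply Fin.ext; simp only [hu]; omega
              simp only [hc, h1, if_pos, h2]
            · have h1 : ¬ (((f i : Fin (2 * Δ)) : ℕ) < Δ) := by omega
              have h2 : z = v := by apply Fin.ext; simp only [hv]; omega
              simp only [hc, h1, if_neg, if_false, h2]
          have hcw : c (f i) ≠ f i := by
            rw [hcwz]; intro h
            rcases hzuv with h' | h' <;> rw [h'] at h <;>
              [exact hwu h.symm; exact hwv h.symm]
          have : sol' (f i) = true := key (f i) hwu hwv hcw (by rw [hcwz]; exact hz)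
          simp [hwu, hwv, this]
      calc Δ = (Finset.range Δ).card := (Finset.card_range Δ).symm
        _ ≤ _ := Finset.card_le_card_of_injOn f hinj (by
          intro a ha b hb h
          simp only [Finset.coe_range, Set.mem_Iio] at ha hb
          have := congrArg Fin.val h
          rw [hfval a ha, hfval b hb] at this
          omega)
    rcases Bool.eq_false_or_eq_true (sol' u) with h | h
    · have hv' : sol' v = false := by
        rcases Bool.eq_false_or_eq_true (sol' v) with h' | h'
        · exact absurd ⟨h, h'⟩ huv'
        · exact h'
      exact main v hv' (Or.inr rfl)
    · exact main u h (Or.inl rfl)
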